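/- For all integers r ≥ 1 and m ≥ 1 and every real Δ ≥ 0, the following inequality holds: ∑_{i=1}^{m} (1/(Δ+i)) · (ln(m+Δ+1) − ln(Δ+i))^{r−1} ≥ (1/r) · (ln(m+Δ+1) − ln(Δ+1))^{r}. -/

import Mathlib

lemma pow_sub_pow_le_aux (a b : ℝ) (n : ℕ) (hb : 0 ≤ b) (hba : b ≤ a) :
    a ^ n - b ^ n ≤ (n : ℝ) * a ^ (n - 1) * (a - b) := by
  have ha : 0 ≤ a := hb.trans hba
  rw [← geom_sum₂_mul]
  have hsum : (∑ i ∈ Finset.range n, a ^ i * b ^ (n - 1 - i)) ≤ (n : ℝ) * a ^ (n - 1) := by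
    calc (∑ i ∈ Finset.range n, a ^ i * b ^ (n - 1 - i))
        ≤ ∑ i ∈ Finset.range n, a ^ (n - 1) := by
          apply Finset.sum_le_sum
          intro i hi
          have hi' : i + (n - 1 - i) = n - 1 := by
            have := Finset.mem_range.mp hi; omega
          calc a ^ i * b ^ (n - 1 - i) ≤ a ^ i * a ^ (n - 1 - i) := by
                apply mul_le_mul_of_nonneg_left (pow_le_pow_left₀ hb hba _) (pow_nonneg ha _)
            _ = a ^ (n - 1) := by rw [← pow_add, hi']
      _ = (n : ℝ) * a ^ (n - 1) := by
          rw [Finset.sum_const, Finset.card_range, nsmul_eq_mul]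
  exact mul_le_mul_of_nonneg_right hsum (by linarith)

/-- the sum-versus-integral estimate used in the grid-USO lower bound:
`∑_{i=1}^{m} (1/(Δ+i)) (ln(m+Δ+1) − ln(Δ+i))^{r−1} ≥ (1/r) (ln(m+Δ+1) − ln(Δ+1))^r`. -/
theorem sum_log_estimate_uso
    (r m : ℕ) (hr : 1 ≤ r) (hm : 1 ≤ m) (Δ : ℝ) (hΔ : 0 ≤ Δ) :
    (1 / (r : ℝ)) * (Real.log ((m : ℝ) + Δ + 1) - Real.log (Δ + 1)) ^ r ≤
      ∑ i ∈ Finset.Icc 1 m,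
        (1 / (Δ + (i : ℝ))) *
          (Real.log ((m : ℝ) + Δ + 1) - Real.log (Δ + (i : ℝ))) ^ (r - 1) := by
  set L := Real.log ((m : ℝ) + Δ + 1) with hL
  set g : ℕ → ℝ := fun i => (L - Real.log (Δ + (i : ℝ))) ^ r with hg
  have hrpos : (0 : ℝ) < r := by exact_mod_cast hr
  -- key termwise bound
  have key : ∀ i ∈ Finset.Icc 1 m,
      (1 / (r : ℝ)) * (g i - g (i + 1)) ≤
        (1 / (Δ + (i : ℝ))) * (L - Real.log (Δ + (i : ℝ))) ^ (r - 1) := by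
    intro i hi
    obtain ⟨hi1, him⟩ := Finset.mem_Icc.mp hi
    have hi1' : (1 : ℝ) ≤ (i : ℝ) := by exact_mod_cast hi1
    have him' : (i : ℝ) ≤ (m : ℝ) := by exact_mod_cast him
    have hx : (0 : ℝ) < Δ + i := by linarith
    have hx1 : (0 : ℝ) < Δ + (i : ℝ) + 1 := by linarith
    set a := L - Real.log (Δ + (i : ℝ)) with ha
    set b := L - Real.log (Δ + ((i : ℕ) + 1 : ℕ) : ℝ) with hb
    have hcast : ((((i : ℕ) + 1 : ℕ)) : ℝ) = (i : ℝ) + 1 := by push_cast; ring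
    have hb0 : 0 ≤ b := by
      rw [hb, sub_nonneg, hL, hcast]
      exact Real.log_le_log (by linarith) (by linarith)
    have hba : b ≤ a := by
      rw [ha, hb]
      have : Real.log (Δ + (i : ℝ)) ≤ Real.log (Δ + ((((i : ℕ) + 1 : ℕ)) : ℝ)) := by
        apply Real.log_le_log hx
        rw [hcast]; linarith
      linarith
    have hab : a - b ≤ 1 / (Δ + (i : ℝ)) := by
      rw [ha, hb, hcast]
      have : Real.log (Δ + (i : ℝ) + 1) - Real.log (Δ + (i : ℝ)) =
          Real.log ((Δ + (i : ℝ) + 1) / (Δ + (i : ℝ))) := by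
        rw [Real.log_div (by linarith) (ne_of_gt hx)]
      rw [show Δ + ((i:ℝ) + 1) = Δ + (i:ℝ) + 1 by ring]
      have hlog : Real.log ((Δ + (i : ℝ) + 1) / (Δ + (i : ℝ))) ≤
          (Δ + (i : ℝ) + 1) / (Δ + (i : ℝ)) - 1 :=
        Real.log_le_sub_one_of_pos (by positivity)
      have hq : (Δ + (i : ℝ) + 1) / (Δ + (i : ℝ)) - 1 = 1 / (Δ + (i : ℝ)) := by
        field_simp
        ring
      linarith
    have hpow := pow_sub_pow_le_aux a b r hb0 hba
    have ha0 : 0 ≤ a := hb0.trans hba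
    have h2 : (r : ℝ) * a ^ (r - 1) * (a - b) ≤ (r : ℝ) * a ^ (r - 1) * (1 / (Δ + (i : ℝ))) := by
      apply mul_le_mul_of_nonneg_left hab
      positivity
    rw [hg]
    rw [div_mul_eq_mul_div, div_le_iff₀ hrpos] at *
    calc (1 : ℝ) * (a ^ r - b ^ r) = a ^ r - b ^ r := by ring
      _ ≤ (r : ℝ) * a ^ (r - 1) * (1 / (Δ + (i : ℝ))) := le_trans hpow h2
      _ = 1 / (Δ + (i : ℝ)) * a ^ (r - 1) * (r : ℝ) := by ring
  -- telescoping
  have htel : ∑ i ∈ Finset.Icc 1 m, (g i - g (i + 1)) = g 1 - g (m + 1) := by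
    rw [← Finset.Ico_add_one_right_eq_Icc, Finset.sum_Ico_eq_sum_range]
    simp only [Nat.add_sub_cancel]
    have := Finset.sum_range_sub' (fun k => g (1 + k)) m
    simpa [add_comm, add_assoc, add_left_comm] using this
  have hgm : g (m + 1) = 0 := by
    have : ((m + 1 : ℕ) : ℝ) = (m : ℝ) + 1 := by push_cast; ring
    simp only [hg, this]
    have : Δ + ((m : ℝ) + 1) = (m : ℝ) + Δ + 1 := by ring
    rw [this, hL, sub_self]
    exact zero_pow (by omega)
  calc (1 / (r : ℝ)) * (L - Real.log (Δ + 1)) ^ r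
      = (1 / (r : ℝ)) * (g 1 - g (m + 1)) := by
        rw [hgm, sub_zero, hg]; norm_num
    _ = ∑ i ∈ Finset.Icc 1 m, (1 / (r : ℝ)) * (g i - g (i + 1)) := by
        rw [← Finset.mul_sum, htel]
    _ ≤ _ := Finset.sum_le_sum key
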